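/- (Straightening at vertices.) Let d ≥ 2 and let γ : [0,1] → ℝ^d be an H² curve with constant speed |γ'| ≡ ℓ > 0. Then for every ε > 0 there exist an H² curve γ̃ : [0,1] → ℝ^d with constant speed ℓ̃ > 0 and a number a ∈ (0,1) such that: (i) on [0, a] the curve γ̃ is the straight segment γ̃(t) = γ(0) + t ℓ̃ γ'(0)/ℓ, whose length a·ℓ̃ is at most ε; (ii) γ̃(0) = γ(0); (iii) ‖γ − γ̃‖_{H²(0,1)} ≤ ε; and (iv) the elastic energies satisfy ℓ̃^{-3} ∫₀¹ |γ̃''|² dt + ℓ̃ ≤ (1 + ε)(ℓ^{-3} ∫₀¹ |γ''|² dt + ℓ). -/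

import Mathlib

open MeasureTheory Set Filter Topology
open scoped ENNReal NNReal

section Helpers

variable {E : Type*} [NormedAddCommGroup E] [NormedSpace ℝ E]

lemma sq_eLpNorm_two (f : ℝ → E) :
    (eLpNorm f 2 volume) ^ 2 = ∫⁻ t, (‖f t‖₊ : ℝ≥0∞) ^ 2 := by
  rw [eLpNorm_eq_lintegral_rpow_enorm_toReal (by norm_num) (by norm_num)]
  rw [show ((2:ℝ≥0∞)).toReal = (2:ℝ) by norm_num]
  rw [← ENNReal.rpow_natCast _ 2, ← ENNReal.rpow_mul]
  norm_num
  rfl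

lemma tendsto_eLpNorm_translate_of_cont (h : ℝ → E) (hc : Continuous h)
    (hs : HasCompactSupport h) :
    Tendsto (fun a : ℝ => eLpNorm (fun t => h (t - a) - h t) 2 volume) (𝓝 0) (𝓝 0) := by
  rw [ENNReal.tendsto_nhds_zero]
  intro ε hε
  set K := Metric.cthickening 1 (tsupport h) with hK
  have hKc : IsCompact K := hs.cthickening
  have hKvol : volume K ≠ ⊤ := hKc.measure_lt_top.ne
  set W : ℝ≥0∞ := max 1 (volume K) with hW
  have hW0 : W ≠ 0 := by simp [hW]
  have hWtop : W ≠ ⊤ := by simp [hW, hKvol, lt_top_iff_ne_top]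
  set δ : ℝ≥0∞ := min ε 1 with hδ
  have hδ0 : δ ≠ 0 := (lt_min hε one_pos).ne'
  have hδtop : δ ≠ ⊤ := by simp [hδ]
  have hδW0 : δ / W ≠ 0 := by
    simp [ENNReal.div_eq_zero_iff, hδ0, hWtop]
  have hδWtop : δ / W ≠ ⊤ := by
    simp [ENNReal.div_eq_top, hδtop, hW0]
  set r : ℝ := (δ / W).toReal with hr
  have hr0 : 0 < r := ENNReal.toReal_pos hδW0 hδWtop
  obtain ⟨δ₀, hδ₀, hδ₀'⟩ :=
    Metric.uniformContinuous_iff.mp (hs.uniformContinuous_of_continuous hc) r hr0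
  filter_upwards [Metric.ball_mem_nhds (0:ℝ) (lt_min hδ₀ one_pos)] with a ha
  rw [Metric.mem_ball, Real.dist_eq, sub_zero] at ha
  have ha1 : |a| < 1 := ha.trans_le (min_le_right _ _)
  have hsupp : Function.support (fun t => h (t - a) - h t) ⊆ K := by
    intro t ht
    simp only [Function.mem_support, ne_eq] at ht
    by_cases h1 : h t = 0
    · have h2 : h (t - a) ≠ 0 := by
        intro h2; exact ht (by rw [h1, h2, sub_zero])
      have : t - a ∈ tsupport h := subset_tsupport h h2
      exact Metric.mem_cthickening_of_dist_le t (t - a) 1 _ this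
        (by rw [Real.dist_eq, show t - (t - a) = a by ring]; exact ha1.le)
    · exact Metric.self_subset_cthickening _ (subset_tsupport h h1)
  have hbound : ∀ t : ℝ, ‖h (t - a) - h t‖ ≤ r := by
    intro t
    have := hδ₀' (a := t - a) (b := t) (by rw [Real.dist_eq]; simpa using ha.trans_le (min_le_left _ _))
    rw [dist_eq_norm] at this
    exact this.le
  calc eLpNorm (fun t => h (t - a) - h t) 2 volume
      = eLpNorm (fun t => h (t - a) - h t) 2 (volume.restrict K) :=
        (eLpNorm_restrict_eq_of_support_subset hsupp).symm
    _ ≤ (volume.restrict K) univ ^ (2:ℝ≥0∞).toReal⁻¹ * ENNReal.ofReal r :=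
        eLpNorm_le_of_ae_bound (ae_of_all _ hbound)
    _ ≤ W * (δ / W) := by
        rw [Measure.restrict_apply_univ, ENNReal.ofReal_toReal hδWtop]
        apply mul_le_mul_left ?_ (δ / W)
        have h2 : ((2:ℝ≥0∞)).toReal⁻¹ = (2⁻¹ : ℝ) := by norm_num
        rw [h2]
        rcases le_or_gt (volume K) 1 with hv | hv
        · calc (volume K) ^ ((2:ℝ)⁻¹) ≤ 1 := ENNReal.rpow_le_one hv (by norm_num)
            _ ≤ W := le_max_left _ _
        · calc (volume K) ^ ((2:ℝ)⁻¹) ≤ (volume K) ^ (1:ℝ) :=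
              ENNReal.rpow_le_rpow_of_exponent_le hv.le (by norm_num)
            _ = volume K := ENNReal.rpow_one _
            _ ≤ W := le_max_right _ _
    _ = δ := ENNReal.mul_div_cancel hW0 hWtop
    _ ≤ ε := min_le_left _ _

lemma tendsto_lintegral_sq_translate (g : ℝ → E) (hg : MemLp g 2 volume) :
    Tendsto (fun a : ℝ => ∫⁻ t, (‖g (t - a) - g t‖₊ : ℝ≥0∞) ^ 2) (𝓝 0) (𝓝 0) := by
  have key : Tendsto (fun a : ℝ => eLpNorm (fun t => g (t - a) - g t) 2 volume) (𝓝 0) (𝓝 0) := by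
    rw [ENNReal.tendsto_nhds_zero]
    intro ε hε
    set δ : ℝ≥0∞ := min (ε / 3) 1 with hδ
    have hδ0 : δ ≠ 0 := by
      exact (lt_min (ENNReal.div_pos hε.ne' (by norm_num)) one_pos).ne'
    obtain ⟨h, h_supp, hgh, h_cont, h_mem⟩ :=
      hg.exists_hasCompactSupport_eLpNorm_sub_le (by norm_num) hδ0
    have hmid := (ENNReal.tendsto_nhds_zero.mp
      (tendsto_eLpNorm_translate_of_cont h h_cont h_supp)) δ (pos_iff_ne_zero.mpr hδ0)
    filter_upwards [hmid] with a hmida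
    have mpa : MeasurePreserving (fun t : ℝ => t - a) volume volume :=
      measurePreserving_sub_right volume a
    have gm : AEStronglyMeasurable g volume := hg.1
    have hm : AEStronglyMeasurable h volume := h_cont.aestronglyMeasurable
    have gma : AEStronglyMeasurable (fun t : ℝ => g (t - a)) volume :=
      gm.comp_measurePreserving mpa
    have hma : AEStronglyMeasurable (fun t : ℝ => h (t - a)) volume :=
      (h_cont.comp (by continuity)).aestronglyMeasurable
    have hdecomp : (fun t : ℝ => g (t - a) - g t) =
        (fun t => (g (t - a) - h (t - a)) + ((h (t - a) - h t) + (h t - g t))) := by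
      funext t; abel
    have hF1 : eLpNorm (fun t : ℝ => g (t - a) - h (t - a)) 2 volume ≤ δ := by
      have : (fun t : ℝ => g (t - a) - h (t - a)) = (g - h) ∘ (fun t : ℝ => t - a) := rfl
      rw [this, eLpNorm_comp_measurePreserving (gm.sub hm) mpa]
      exact hgh
    have hF3 : eLpNorm (fun t : ℝ => h t - g t) 2 volume ≤ δ := by
      have : eLpNorm (fun t : ℝ => h t - g t) 2 volume = eLpNorm (g - h) 2 volume := by
        rw [show (fun t : ℝ => h t - g t) = h - g from rfl, eLpNorm_sub_comm]
      rw [this]; exact hgh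
    calc eLpNorm (fun t : ℝ => g (t - a) - g t) 2 volume
        ≤ eLpNorm (fun t : ℝ => g (t - a) - h (t - a)) 2 volume +
            eLpNorm (fun t : ℝ => (h (t - a) - h t) + (h t - g t)) 2 volume := by
          rw [hdecomp]
          exact eLpNorm_add_le (gma.sub hma) (((hma.sub hm)).add (hm.sub gm)) one_le_two
      _ ≤ eLpNorm (fun t : ℝ => g (t - a) - h (t - a)) 2 volume +
            (eLpNorm (fun t : ℝ => h (t - a) - h t) 2 volume +
             eLpNorm (fun t : ℝ => h t - g t) 2 volume) := by
          gcongr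
          exact eLpNorm_add_le (hma.sub hm) (hm.sub gm) one_le_two
      _ ≤ δ + (δ + δ) := by gcongr
      _ ≤ ε / 3 + (ε / 3 + ε / 3) := by gcongr <;> exact min_le_left _ _
      _ = ε := by rw [← add_assoc]; exact ENNReal.add_thirds ε
  have hsq : (fun a : ℝ => ∫⁻ t, (‖g (t - a) - g t‖₊ : ℝ≥0∞) ^ 2) =
      (fun a : ℝ => (eLpNorm (fun t => g (t - a) - g t) 2 volume) ^ 2) := by
    funext a; rw [sq_eLpNorm_two]
  rw [hsq]
  have : Tendsto (fun x : ℝ≥0∞ => x ^ 2) (𝓝 0) (𝓝 (0 ^ 2)) :=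
    (ENNReal.continuous_pow 2).tendsto 0
  simpa [Function.comp_def] using this.comp key

end Helpers

set_option maxHeartbeats 2000000 in
theorem straightening_at_vertices
    (d : ℕ) (hd : 2 ≤ d) (ℓ : ℝ) (hℓ : 0 < ℓ)
    (γ γ' γ'' : ℝ → EuclideanSpace ℝ (Fin d))
    (hderiv : ∀ t ∈ Icc (0:ℝ) 1, HasDerivWithinAt γ (γ' t) (Icc (0:ℝ) 1) t)
    (hAC : ∀ t ∈ Icc (0:ℝ) 1, γ' t = γ' 0 + ∫ s in (0:ℝ)..t, γ'' s)
    (hint1 : IntervalIntegrable γ'' volume 0 1)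
    (hint2 : IntervalIntegrable (fun t => ‖γ'' t‖ ^ 2) volume 0 1)
    (hspeed : ∀ t ∈ Icc (0:ℝ) 1, ‖γ' t‖ = ℓ) :
    ∀ ε > (0:ℝ),
      ∃ (γt γt' γt'' : ℝ → EuclideanSpace ℝ (Fin d)) (ℓt a : ℝ),
        0 < ℓt ∧ a ∈ Ioo (0:ℝ) 1 ∧
        (∀ t ∈ Icc (0:ℝ) 1, HasDerivWithinAt γt (γt' t) (Icc (0:ℝ) 1) t) ∧
        (∀ t ∈ Icc (0:ℝ) 1, γt' t = γt' 0 + ∫ s in (0:ℝ)..t, γt'' s) ∧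
        IntervalIntegrable γt'' volume 0 1 ∧
        IntervalIntegrable (fun t => ‖γt'' t‖ ^ 2) volume 0 1 ∧
        (∀ t ∈ Icc (0:ℝ) 1, ‖γt' t‖ = ℓt) ∧
        (∀ t ∈ Icc (0:ℝ) a, γt t = γ 0 + (t * ℓt) • (ℓ⁻¹ • γ' 0)) ∧
        a * ℓt ≤ ε ∧
        γt 0 = γ 0 ∧
        Real.sqrt (∫ t in (0:ℝ)..1,
          (‖γ t - γt t‖ ^ 2 + ‖γ' t - γt' t‖ ^ 2 + ‖γ'' t - γt'' t‖ ^ 2)) ≤ ε ∧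
        (ℓt ^ 3)⁻¹ * (∫ t in (0:ℝ)..1, ‖γt'' t‖ ^ 2) + ℓt ≤
          (1 + ε) * ((ℓ ^ 3)⁻¹ * (∫ t in (0:ℝ)..1, ‖γ'' t‖ ^ 2) + ℓ) := by
  intro ε hε
  -- basic continuity facts
  have hγcont : ContinuousOn γ (Icc (0:ℝ) 1) := fun t ht => (hderiv t ht).continuousWithinAt
  have hprim : ContinuousOn (fun b => ∫ s in (0:ℝ)..b, γ'' s) (Icc (0:ℝ) 1) := by
    have := intervalIntegral.continuousOn_primitive_interval' hint1
      (by rw [uIcc_of_le zero_le_one]; exact ⟨le_refl 0, zero_le_one⟩)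
    rwa [uIcc_of_le zero_le_one] at this
  have hγ'cont : ContinuousOn γ' (Icc (0:ℝ) 1) := by
    have hcc : ContinuousOn (fun t => γ' 0 + ∫ s in (0:ℝ)..t, γ'' s) (Icc (0:ℝ) 1) :=
      continuousOn_const.add hprim
    exact hcc.congr fun t ht => hAC t ht
  -- moduli of uniform continuity
  set q : ℝ := ε / 2 with hqdef
  have hq : 0 < q := by positivity
  obtain ⟨δ₁, hδ₁, Hδ₁⟩ := Metric.uniformContinuousOn_iff.mp
    (isCompact_Icc.uniformContinuousOn_of_continuous hγcont) (q / 2) (by positivity)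
  obtain ⟨δ₂, hδ₂, Hδ₂⟩ := Metric.uniformContinuousOn_iff.mp
    (isCompact_Icc.uniformContinuousOn_of_continuous hγ'cont) q hq
  -- extension of γ'' to ℝ
  set G : ℝ → EuclideanSpace ℝ (Fin d) := (Ioc (0:ℝ) 1).indicator γ'' with hGdef
  have hγ''m : AEStronglyMeasurable γ'' (volume.restrict (Ioc (0:ℝ) 1)) :=
    ((intervalIntegrable_iff_integrableOn_Ioc_of_le zero_le_one).mp hint1).aestronglyMeasurable
  have hGm : AEStronglyMeasurable G volume :=
    (aestronglyMeasurable_indicator_iff measurableSet_Ioc).mpr hγ''m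
  have hGmem : MemLp G 2 volume := by
    rw [memLp_two_iff_integrable_sq_norm hGm]
    have : (fun x => ‖G x‖ ^ 2) = (Ioc (0:ℝ) 1).indicator (fun x => ‖γ'' x‖ ^ 2) := by
      funext x
      by_cases hx : x ∈ Ioc (0:ℝ) 1 <;>
        simp [hGdef, indicator_of_mem, indicator_of_notMem, hx]
    rw [this, integrable_indicator_iff measurableSet_Ioc]
    exact (intervalIntegrable_iff_integrableOn_Ioc_of_le zero_le_one).mp hint2
  have htr : Tendsto (fun a : ℝ => ∫⁻ t, (‖G (t - a) - G t‖₊ : ℝ≥0∞) ^ 2)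
      (𝓝[>] (0:ℝ)) (𝓝 0) :=
    (tendsto_lintegral_sq_translate G hGmem).mono_left nhdsWithin_le_nhds
  -- choose a
  have ev1 : ∀ᶠ a in 𝓝[>] (0:ℝ), a ∈ Ioo (0:ℝ) 1 :=
    Ioo_mem_nhdsGT_of_mem ⟨le_refl 0, zero_lt_one⟩
  have ev2 : ∀ᶠ a in 𝓝[>] (0:ℝ), a < δ₁ := by
    filter_upwards [Ioo_mem_nhdsGT_of_mem (show (0:ℝ) ∈ Ico 0 δ₁ from ⟨le_refl 0, hδ₁⟩)]
      with a ha using ha.2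
  have ev3 : ∀ᶠ a in 𝓝[>] (0:ℝ), a < δ₂ := by
    filter_upwards [Ioo_mem_nhdsGT_of_mem (show (0:ℝ) ∈ Ico 0 δ₂ from ⟨le_refl 0, hδ₂⟩)]
      with a ha using ha.2
  have ev4 : ∀ᶠ a in 𝓝[>] (0:ℝ), a * ℓ ≤ min ε (q / 2) := by
    have hpos : 0 < min ε (q / 2) / ℓ := by
      apply div_pos (lt_min hε (by positivity)) hℓ
    filter_upwards [Ioo_mem_nhdsGT_of_mem (show (0:ℝ) ∈ Ico 0 (min ε (q/2)/ℓ) from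
      ⟨le_refl 0, hpos⟩)] with a ha
    calc a * ℓ ≤ (min ε (q/2)/ℓ) * ℓ := by
          apply mul_le_mul_of_nonneg_right ha.2.le hℓ.le
      _ = min ε (q/2) := by field_simp
  have ev5 : ∀ᶠ a in 𝓝[>] (0:ℝ),
      (∫⁻ t, (‖G (t - a) - G t‖₊ : ℝ≥0∞) ^ 2) < ENNReal.ofReal (q ^ 2) := by
    exact htr (Iio_mem_nhds (by simp [ENNReal.ofReal_pos]; positivity))
  obtain ⟨a, haI, ha1, ha2, ha4, ha5⟩ :=
    (ev1.and (ev2.and (ev3.and (ev4.and ev5)))).exists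
  obtain ⟨h0a, ha1'⟩ := haI
  have haε : a * ℓ ≤ ε := ha4.trans (min_le_left _ _)
  have haq : a * ℓ ≤ q / 2 := ha4.trans (min_le_right _ _)
  -- the construction
  set v : EuclideanSpace ℝ (Fin d) := ℓ⁻¹ • γ' 0 with hvdef
  have hv : ℓ • v = γ' 0 := smul_inv_smul₀ hℓ.ne' _
  have hvnorm : ‖v‖ = 1 := by
    rw [hvdef, norm_smul, norm_inv, Real.norm_of_nonneg hℓ.le,
      hspeed 0 ⟨le_refl 0, zero_le_one⟩]
    field_simp
  set γt : ℝ → EuclideanSpace ℝ (Fin d) :=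
    fun t => γ (max (t - a) 0) + ((min t a) * ℓ) • v with hγtdef
  set γt' : ℝ → EuclideanSpace ℝ (Fin d) := fun t => γ' (max (t - a) 0) with hγt'def
  set γt'' : ℝ → EuclideanSpace ℝ (Fin d) :=
    fun t => if t ≤ a then 0 else γ'' (t - a) with hγt''def
  have hmax : ∀ t ∈ Icc (0:ℝ) 1, max (t - a) 0 ∈ Icc (0:ℝ) 1 := by
    intro t ht
    exact ⟨le_max_right _ _, max_le (by linarith [ht.2]) zero_le_one⟩
  have hγt'0 : γt' 0 = γ' 0 := by
    simp only [hγt'def]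
    rw [max_eq_right (by linarith : (0:ℝ) - a ≤ 0)]
  -- integrability of γt''
  have hi0a : IntervalIntegrable γt'' volume 0 a := by
    rw [intervalIntegrable_iff_integrableOn_Ioc_of_le h0a.le]
    refine (integrable_zero _ _ _).congr ?_
    filter_upwards [ae_restrict_mem measurableSet_Ioc] with x hx
    simp [hγt''def, if_pos hx.2]
  have hIoc1a : IntervalIntegrable γ'' volume 0 (1 - a) := by
    apply hint1.mono_set
    rw [uIcc_of_le (by linarith), uIcc_of_le zero_le_one]
    exact Icc_subset_Icc le_rfl (by linarith)
  have hia1 : IntervalIntegrable γt'' volume a 1 := by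
    have h2 := hIoc1a.comp_sub_right a
    simp only [zero_add, sub_add_cancel] at h2
    rw [intervalIntegrable_iff_integrableOn_Ioc_of_le ha1'.le] at h2 ⊢
    refine h2.congr ?_
    filter_upwards [ae_restrict_mem measurableSet_Ioc] with x hx
    simp [hγt''def, if_neg (not_le.mpr hx.1)]
  have hi01 : IntervalIntegrable γt'' volume 0 1 := hi0a.trans hia1
  have hq0a : IntervalIntegrable (fun t => ‖γt'' t‖ ^ 2) volume 0 a := by
    rw [intervalIntegrable_iff_integrableOn_Ioc_of_le h0a.le]
    refine (integrable_zero _ _ _).congr ?_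
    filter_upwards [ae_restrict_mem measurableSet_Ioc] with x hx
    simp [hγt''def, if_pos hx.2]
  have hIoc2a : IntervalIntegrable (fun t => ‖γ'' t‖ ^ 2) volume 0 (1 - a) := by
    apply hint2.mono_set
    rw [uIcc_of_le (by linarith), uIcc_of_le zero_le_one]
    exact Icc_subset_Icc le_rfl (by linarith)
  have hqa1 : IntervalIntegrable (fun t => ‖γt'' t‖ ^ 2) volume a 1 := by
    have h2 := hIoc2a.comp_sub_right a
    simp only [zero_add, sub_add_cancel] at h2
    rw [intervalIntegrable_iff_integrableOn_Ioc_of_le ha1'.le] at h2 ⊢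
    refine h2.congr ?_
    filter_upwards [ae_restrict_mem measurableSet_Ioc] with x hx
    simp [hγt''def, if_neg (not_le.mpr hx.1)]
  have hq01 : IntervalIntegrable (fun t => ‖γt'' t‖ ^ 2) volume 0 1 := hq0a.trans hqa1
  -- derivative of γt
  have hderivt : ∀ t ∈ Icc (0:ℝ) 1, HasDerivWithinAt γt (γt' t) (Icc (0:ℝ) 1) t := by
    intro t ht
    have hseg : ∀ x : ℝ, HasDerivAt (fun s : ℝ => γ 0 + (s * ℓ) • v) (γ' 0) x := by
      intro x
      have h1 : HasDerivAt (fun s : ℝ => (s * ℓ) • v) (ℓ • v) x := by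
        simpa using ((hasDerivAt_id x).mul_const ℓ).smul_const v
      simpa [hv] using h1.const_add (γ 0)
    have h1 : HasDerivWithinAt γt (γt' t) (Icc (0:ℝ) 1 ∩ Iic a) t := by
      rcases le_or_gt t a with hta | hta
      · have : γt' t = γ' 0 := by
          simp only [hγt'def]; rw [max_eq_right (by linarith : t - a ≤ 0)]
        rw [this]
        refine ((hseg t).hasDerivWithinAt).congr ?_ ?_
        · intro s hs
          simp only [hγtdef]
          rw [max_eq_right (sub_nonpos.mpr hs.2), min_eq_left hs.2]
        · simp only [hγtdef]
          rw [max_eq_right (sub_nonpos.mpr hta), min_eq_left hta]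
      · rw [hasDerivWithinAt_iff_hasFDerivWithinAt]
        apply HasFDerivWithinAt.of_notMem_closure
        intro hc
        exact absurd (closure_minimal inter_subset_right isClosed_Iic hc) (not_le.mpr hta)
    have h2 : HasDerivWithinAt γt (γt' t) (Icc (0:ℝ) 1 ∩ Ici a) t := by
      rcases lt_or_ge t a with hta | hta
      · rw [hasDerivWithinAt_iff_hasFDerivWithinAt]
        apply HasFDerivWithinAt.of_notMem_closure
        intro hc
        exact absurd (closure_minimal inter_subset_right isClosed_Ici hc) (not_le.mpr hta)
      · have hta' : t - a ∈ Icc (0:ℝ) 1 := ⟨by linarith, by linarith [ht.2]⟩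
        have hγd := hderiv (t - a) hta'
        have hsub : HasDerivWithinAt (fun s : ℝ => s - a) 1 (Icc (0:ℝ) 1 ∩ Ici a) t :=
          ((hasDerivAt_id t).sub_const a).hasDerivWithinAt
        have hmaps : MapsTo (fun s : ℝ => s - a) (Icc (0:ℝ) 1 ∩ Ici a) (Icc (0:ℝ) 1) := by
          intro s hs
          have h1 : a ≤ s := hs.2
          have h2 : s ≤ 1 := hs.1.2
          simp only [mem_Icc]
          constructor <;> linarith
        have hcomp := HasDerivWithinAt.scomp (x := t) hγd hsub hmaps
        have hadd := hcomp.add_const ((a * ℓ) • v)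
        have hγt't : γt' t = γ' (t - a) := by
          simp only [hγt'def]; rw [max_eq_left (sub_nonneg.mpr hta)]
        rw [hγt't]
        have : HasDerivWithinAt (fun s : ℝ => γ (s - a) + (a * ℓ) • v) (γ' (t - a))
            (Icc (0:ℝ) 1 ∩ Ici a) t := by
          simpa using hadd
        refine this.congr ?_ ?_
        · intro s hs
          simp only [hγtdef]
          rw [max_eq_left (sub_nonneg.mpr hs.2), min_eq_right hs.2]
        · simp only [hγtdef]
          rw [max_eq_left (sub_nonneg.mpr hta), min_eq_right hta]
    have := h1.union h2
    rwa [← inter_union_distrib_left, Iic_union_Ici, inter_univ] at this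
  -- AC formula for γt'
  have hACt : ∀ t ∈ Icc (0:ℝ) 1, γt' t = γt' 0 + ∫ s in (0:ℝ)..t, γt'' s := by
    intro t ht
    rcases le_or_gt t a with hta | hta
    · have hz : (∫ s in (0:ℝ)..t, γt'' s) = 0 := by
        rw [intervalIntegral.integral_congr (g := fun _ => 0), intervalIntegral.integral_zero]
        intro s hs
        rw [uIcc_of_le ht.1] at hs
        exact if_pos (hs.2.trans hta)
      rw [hz, hγt'0, add_zero]
      simp only [hγt'def]
      rw [max_eq_right (by linarith : t - a ≤ 0)]
    · have hmono' : IntervalIntegrable γt'' volume a t := by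
        apply hia1.mono_set
        rw [uIcc_of_le hta.le, uIcc_of_le ha1'.le]
        exact Icc_subset_Icc le_rfl ht.2
      have hsplit : (∫ s in (0:ℝ)..t, γt'' s) =
          (∫ s in (0:ℝ)..a, γt'' s) + ∫ s in a..t, γt'' s :=
        (intervalIntegral.integral_add_adjacent_intervals hi0a hmono').symm
      have hz : (∫ s in (0:ℝ)..a, γt'' s) = 0 := by
        rw [intervalIntegral.integral_congr (g := fun _ => 0), intervalIntegral.integral_zero]
        intro s hs
        rw [uIcc_of_le h0a.le] at hs
        exact if_pos hs.2
      have h2 : (∫ s in a..t, γt'' s) = ∫ s in a..t, γ'' (s - a) := by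
        apply intervalIntegral.integral_congr_ae
        apply ae_of_all
        intro s hs
        rw [uIoc_of_le hta.le] at hs
        exact if_neg (not_le.mpr hs.1)
      have h3 : (∫ s in a..t, γ'' (s - a)) = ∫ s in (0:ℝ)..(t - a), γ'' s := by
        rw [intervalIntegral.integral_comp_sub_right γ'' a, sub_self]
      have h4 : γt' t = γ' 0 + ∫ s in (0:ℝ)..(t - a), γ'' s := by
        have := hAC (t - a) ⟨by linarith, by linarith [ht.2]⟩
        simp only [hγt'def]
        rw [max_eq_left (sub_nonneg.mpr hta.le)]
        exact this
      rw [hsplit, hz, zero_add, h2, h3, h4, hγt'0]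
  -- speed
  have hspeedt : ∀ t ∈ Icc (0:ℝ) 1, ‖γt' t‖ = ℓ := fun t ht => hspeed _ (hmax t ht)
  -- energy
  have henergy : (ℓ ^ 3)⁻¹ * (∫ t in (0:ℝ)..1, ‖γt'' t‖ ^ 2) + ℓ ≤
      (1 + ε) * ((ℓ ^ 3)⁻¹ * (∫ t in (0:ℝ)..1, ‖γ'' t‖ ^ 2) + ℓ) := by
    have hsplit : (∫ t in (0:ℝ)..1, ‖γt'' t‖ ^ 2) =
        (∫ t in (0:ℝ)..a, ‖γt'' t‖ ^ 2) + ∫ t in a..1, ‖γt'' t‖ ^ 2 :=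
      (intervalIntegral.integral_add_adjacent_intervals hq0a hqa1).symm
    have hz : (∫ t in (0:ℝ)..a, ‖γt'' t‖ ^ 2) = 0 := by
      rw [intervalIntegral.integral_congr (g := fun _ => 0), intervalIntegral.integral_zero]
      intro s hs
      rw [uIcc_of_le h0a.le] at hs
      simp [hγt''def, if_pos hs.2]
    have h2 : (∫ t in a..1, ‖γt'' t‖ ^ 2) = ∫ t in a..1, ‖γ'' (t - a)‖ ^ 2 := by
      apply intervalIntegral.integral_congr_ae
      apply ae_of_all
      intro s hs
      rw [uIoc_of_le ha1'.le] at hs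
      simp [hγt''def, if_neg (not_le.mpr hs.1)]
    have h3 : (∫ t in a..1, ‖γ'' (t - a)‖ ^ 2) = ∫ t in (0:ℝ)..(1 - a), ‖γ'' t‖ ^ 2 := by
      rw [intervalIntegral.integral_comp_sub_right (fun t => ‖γ'' t‖ ^ 2) a, sub_self]
    have hmono : (∫ t in (0:ℝ)..(1 - a), ‖γ'' t‖ ^ 2) ≤ ∫ t in (0:ℝ)..1, ‖γ'' t‖ ^ 2 := by
      apply intervalIntegral.integral_mono_interval (le_refl 0) (by linarith) (by linarith)
      · exact Eventually.of_forall fun x => by positivity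
      · exact hint2
    have hY0 : 0 ≤ ∫ t in (0:ℝ)..1, ‖γ'' t‖ ^ 2 :=
      intervalIntegral.integral_nonneg zero_le_one fun x _ => by positivity
    have hinv : 0 < (ℓ ^ 3)⁻¹ := by positivity
    rw [hsplit, hz, zero_add, h2, h3]
    have k1 : (ℓ ^ 3)⁻¹ * (∫ t in (0:ℝ)..(1 - a), ‖γ'' t‖ ^ 2) ≤
        (ℓ ^ 3)⁻¹ * ∫ t in (0:ℝ)..1, ‖γ'' t‖ ^ 2 :=
      mul_le_mul_of_nonneg_left hmono hinv.le
    have k2 : (ℓ ^ 3)⁻¹ * (∫ t in (0:ℝ)..1, ‖γ'' t‖ ^ 2) + ℓ ≤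
        (1 + ε) * ((ℓ ^ 3)⁻¹ * (∫ t in (0:ℝ)..1, ‖γ'' t‖ ^ 2) + ℓ) := by
      apply le_mul_of_one_le_left
      · have := mul_nonneg hinv.le hY0
        linarith
      · linarith
    linarith
  -- H² estimate
  have hγtcont : ContinuousOn γt (Icc (0:ℝ) 1) := by
    apply ContinuousOn.add
    · exact hγcont.comp (Continuous.continuousOn (by fun_prop)) hmax
    · exact Continuous.continuousOn (by fun_prop)
  have hγt'cont : ContinuousOn γt' (Icc (0:ℝ) 1) :=
    hγ'cont.comp (Continuous.continuousOn (by fun_prop)) hmax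
  have hmaxdist : ∀ t ∈ Icc (0:ℝ) 1, dist t (max (t - a) 0) ≤ a := by
    intro t ht
    rcases le_total (t - a) 0 with h | h
    · rw [max_eq_right h, Real.dist_eq, sub_zero, abs_of_nonneg ht.1]
      linarith
    · rw [max_eq_left h, Real.dist_eq, show t - (t - a) = a by ring, abs_of_nonneg h0a.le]
  have supA : ∀ t ∈ Icc (0:ℝ) 1, ‖γ t - γt t‖ ≤ q := by
    intro t ht
    have hm := hmax t ht
    have hd : dist (γ t) (γ (max (t - a) 0)) < q / 2 :=
      Hδ₁ t ht _ hm ((hmaxdist t ht).trans_lt ha1)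
    have hterm : ‖((min t a) * ℓ) • v‖ ≤ q / 2 := by
      rw [norm_smul, hvnorm, mul_one, Real.norm_of_nonneg
        (mul_nonneg (le_min ht.1 h0a.le) hℓ.le)]
      calc min t a * ℓ ≤ a * ℓ := by
            apply mul_le_mul_of_nonneg_right (min_le_right _ _) hℓ.le
        _ ≤ q / 2 := haq
    calc ‖γ t - γt t‖ = ‖(γ t - γ (max (t - a) 0)) - ((min t a) * ℓ) • v‖ := by
          simp only [hγtdef]; congr 1; abel
      _ ≤ ‖γ t - γ (max (t - a) 0)‖ + ‖((min t a) * ℓ) • v‖ := norm_sub_le _ _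
      _ ≤ q / 2 + q / 2 := by
          rw [← dist_eq_norm]
          exact add_le_add hd.le hterm
      _ = q := by ring
  have supB : ∀ t ∈ Icc (0:ℝ) 1, ‖γ' t - γt' t‖ ≤ q := by
    intro t ht
    have hm := hmax t ht
    have hd : dist (γ' t) (γ' (max (t - a) 0)) < q :=
      Hδ₂ t ht _ hm ((hmaxdist t ht).trans_lt ha2)
    rw [← dist_eq_norm]
    exact hd.le
  -- integrability of the three pieces
  have hAint : IntervalIntegrable (fun t => ‖γ t - γt t‖ ^ 2) volume 0 1 := by
    apply ContinuousOn.intervalIntegrable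
    rw [uIcc_of_le zero_le_one]
    exact ((hγcont.sub hγtcont).norm).pow 2
  have hBint : IntervalIntegrable (fun t => ‖γ' t - γt' t‖ ^ 2) volume 0 1 := by
    apply ContinuousOn.intervalIntegrable
    rw [uIcc_of_le zero_le_one]
    exact ((hγ'cont.sub hγt'cont).norm).pow 2
  have hsm1 : AEStronglyMeasurable γ'' (volume.restrict (Set.uIoc (0:ℝ) 1)) :=
    hint1.def'.aestronglyMeasurable
  have hsm2 : AEStronglyMeasurable γt'' (volume.restrict (Set.uIoc (0:ℝ) 1)) :=
    hi01.def'.aestronglyMeasurable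
  have hCint : IntervalIntegrable (fun t => ‖γ'' t - γt'' t‖ ^ 2) volume 0 1 := by
    refine IntervalIntegrable.mono_fun
      ((hint2.const_mul 2).add (hq01.const_mul 2)) ?_ ?_
    · have heq : (fun t => ‖γ'' t - γt'' t‖ ^ 2) =
          fun t => ‖γ'' t - γt'' t‖ * ‖γ'' t - γt'' t‖ := by
        funext t; ring
      rw [heq]
      exact ((hsm1.sub hsm2).norm).mul ((hsm1.sub hsm2).norm)
    · apply ae_of_all
      intro x
      have h3 : ‖γ'' x - γt'' x‖ ^ 2 ≤ 2 * ‖γ'' x‖ ^ 2 + 2 * ‖γt'' x‖ ^ 2 := by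
        have h4 : ‖γ'' x - γt'' x‖ ^ 2 ≤ (‖γ'' x‖ + ‖γt'' x‖) ^ 2 :=
          pow_le_pow_left₀ (norm_nonneg _) (norm_sub_le _ _) 2
        nlinarith [sq_nonneg (‖γ'' x‖ - ‖γt'' x‖)]
      have e1 : ‖‖γ'' x - γt'' x‖ ^ 2‖ = ‖γ'' x - γt'' x‖ ^ 2 := by
        rw [Real.norm_eq_abs]
        exact abs_of_nonneg (pow_nonneg (norm_nonneg _) 2)
      have e2 : (2 * ‖γ'' x‖ ^ 2 + 2 * ‖γt'' x‖ ^ 2) ≤ ‖2 * ‖γ'' x‖ ^ 2 + 2 * ‖γt'' x‖ ^ 2‖ :=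
        le_abs_self _
      show ‖‖γ'' x - γt'' x‖ ^ 2‖ ≤ ‖2 * ‖γ'' x‖ ^ 2 + 2 * ‖γt'' x‖ ^ 2‖
      rw [e1]
      exact h3.trans e2
  -- the C-term bound via translation
  have hCbound : (∫ t in (0:ℝ)..1, ‖γ'' t - γt'' t‖ ^ 2) ≤ q ^ 2 := by
    have hGa : AEStronglyMeasurable (fun t : ℝ => G (t - a)) volume :=
      hGm.comp_measurePreserving (measurePreserving_sub_right volume a)
    have hdiffm : AEStronglyMeasurable (fun t : ℝ => ‖G (t - a) - G t‖ ^ 2) volume := by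
      have heq : (fun t : ℝ => ‖G (t - a) - G t‖ ^ 2) =
          fun t => ‖G (t - a) - G t‖ * ‖G (t - a) - G t‖ := by funext t; ring
      rw [heq]
      exact ((hGa.sub hGm).norm).mul ((hGa.sub hGm).norm)
    have hne : ∀ᵐ t ∂(volume.restrict (Ioc (0:ℝ) 1)), t ≠ a := by
      apply ae_restrict_of_ae
      refine (ae_iff).mpr ?_
      simp
    have hC2 : ∀ᵐ t ∂(volume.restrict (Ioc (0:ℝ) 1)),
        ‖γ'' t - γt'' t‖ ^ 2 = ‖G (t - a) - G t‖ ^ 2 := by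
      filter_upwards [ae_restrict_mem measurableSet_Ioc, hne] with t htmem htne
      have hGt : G t = γ'' t := indicator_of_mem htmem _
      rcases lt_or_gt_of_ne htne with hta | hta
      · have h1 : γt'' t = 0 := if_pos hta.le
        have h2 : G (t - a) = 0 := indicator_of_notMem (by
          intro hc; exact absurd (mem_Ioc.mp hc).1 (by linarith)) _
        rw [h1, h2, hGt, sub_zero, zero_sub, norm_neg]
      · have h1 : γt'' t = γ'' (t - a) := if_neg (not_le.mpr hta)
        have h2 : G (t - a) = γ'' (t - a) := indicator_of_mem
          (mem_Ioc.mpr ⟨by linarith, by linarith [htmem.2]⟩) _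
        rw [h1, h2, hGt, ← norm_neg]
        congr 1; abel
    calc (∫ t in (0:ℝ)..1, ‖γ'' t - γt'' t‖ ^ 2)
        = ∫ t in Ioc (0:ℝ) 1, ‖γ'' t - γt'' t‖ ^ 2 :=
          intervalIntegral.integral_of_le zero_le_one
      _ = ∫ t in Ioc (0:ℝ) 1, ‖G (t - a) - G t‖ ^ 2 := integral_congr_ae hC2
      _ = (∫⁻ t in Ioc (0:ℝ) 1, ENNReal.ofReal (‖G (t - a) - G t‖ ^ 2)).toReal := by
          rw [integral_eq_lintegral_of_nonneg_ae (ae_of_all _ fun x => by positivity)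
            (hdiffm.restrict)]
      _ = (∫⁻ t in Ioc (0:ℝ) 1, (‖G (t - a) - G t‖₊ : ℝ≥0∞) ^ 2).toReal := by
          congr 1
          apply lintegral_congr
          intro t
          rw [ENNReal.ofReal_pow (norm_nonneg _), ofReal_norm]
          rfl
      _ ≤ (∫⁻ t, (‖G (t - a) - G t‖₊ : ℝ≥0∞) ^ 2).toReal := by
          apply ENNReal.toReal_mono (ha5.trans_le le_top).ne
          exact setLIntegral_le_lintegral _ _
      _ ≤ (ENNReal.ofReal (q ^ 2)).toReal := by
          apply ENNReal.toReal_mono ENNReal.ofReal_ne_top ha5.le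
      _ = q ^ 2 := ENNReal.toReal_ofReal (by positivity)
  -- assemble the H² bound
  have hH2 : Real.sqrt (∫ t in (0:ℝ)..1,
      (‖γ t - γt t‖ ^ 2 + ‖γ' t - γt' t‖ ^ 2 + ‖γ'' t - γt'' t‖ ^ 2)) ≤ ε := by
    have hsplit : (∫ t in (0:ℝ)..1,
        (‖γ t - γt t‖ ^ 2 + ‖γ' t - γt' t‖ ^ 2 + ‖γ'' t - γt'' t‖ ^ 2)) =
        (∫ t in (0:ℝ)..1, ‖γ t - γt t‖ ^ 2) + (∫ t in (0:ℝ)..1, ‖γ' t - γt' t‖ ^ 2) +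
          ∫ t in (0:ℝ)..1, ‖γ'' t - γt'' t‖ ^ 2 := by
      rw [intervalIntegral.integral_add (hAint.add hBint) hCint,
        intervalIntegral.integral_add hAint hBint]
    have hA : (∫ t in (0:ℝ)..1, ‖γ t - γt t‖ ^ 2) ≤ q ^ 2 := by
      calc (∫ t in (0:ℝ)..1, ‖γ t - γt t‖ ^ 2) ≤ ∫ _ in (0:ℝ)..1, q ^ 2 := by
            apply intervalIntegral.integral_mono_on zero_le_one hAint
              intervalIntegrable_const
            intro x hx
            exact pow_le_pow_left₀ (norm_nonneg _) (supA x hx) 2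
        _ = q ^ 2 := by simp
    have hB : (∫ t in (0:ℝ)..1, ‖γ' t - γt' t‖ ^ 2) ≤ q ^ 2 := by
      calc (∫ t in (0:ℝ)..1, ‖γ' t - γt' t‖ ^ 2) ≤ ∫ _ in (0:ℝ)..1, q ^ 2 := by
            apply intervalIntegral.integral_mono_on zero_le_one hBint
              intervalIntegrable_const
            intro x hx
            exact pow_le_pow_left₀ (norm_nonneg _) (supB x hx) 2
        _ = q ^ 2 := by simp
    calc Real.sqrt (∫ t in (0:ℝ)..1,
        (‖γ t - γt t‖ ^ 2 + ‖γ' t - γt' t‖ ^ 2 + ‖γ'' t - γt'' t‖ ^ 2))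
        ≤ Real.sqrt (ε ^ 2) := by
          apply Real.sqrt_le_sqrt
          rw [hsplit]
          have : q ^ 2 + q ^ 2 + q ^ 2 ≤ ε ^ 2 := by
            rw [hqdef]; nlinarith
          linarith [hA, hB, hCbound]
      _ = ε := Real.sqrt_sq hε.le
  -- conclude
  refine ⟨γt, γt', γt'', ℓ, a, hℓ, ⟨h0a, ha1'⟩, hderivt, hACt, hi01, hq01, hspeedt, ?_,
    haε, ?_, hH2, henergy⟩
  · intro t ht
    simp only [hγtdef]
    rw [max_eq_right (sub_nonpos.mpr ht.2), min_eq_left ht.2]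
  · simp only [hγtdef]
    rw [max_eq_right (by linarith : (0:ℝ) - a ≤ 0), min_eq_left h0a.le]
    simp
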